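/- (Entropy bound for variable-length messages; Eqs. (57)–(62) of the converse.) Let M be a random variable on a finite probability space taking values in the set of binary strings of length at least 1, and let L = len(M) denote its length. Then (a) H₂(M) ≤ E[L] + H₂(L); and (b) if E[L] ≤ m for a real number m > 1, then H₂(L) ≤ m·h_b(1/m), and consequently H₂(M) ≤ m·(1 + h_b(1/m)). -/

import Mathlib

open Finset

/-- A probability mass function on a finite type. -/
def IsPMF {α : Type*} [Fintype α] (p : α → ℝ) : Prop :=
  (∀ a, 0 ≤ p a) ∧ ∑ a, p a = 1

/-- `Pr[W = a]` for a random variable `W` on a finite probability space with pmf `p`. -/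
noncomputable def probOf {Ω : Type*} [Fintype Ω] (p : Ω → ℝ) {α : Type*} [DecidableEq α]
    (W : Ω → α) (a : α) : ℝ :=
  ∑ ω ∈ univ.filter (fun ω => W ω = a), p ω

/-- Shannon entropy in bits `H₂(W) = −∑_w Pr[W=w] log₂ Pr[W=w]` of a discrete random
variable `W` on a finite probability space, with `0·log₂ 0 = 0` (automatic in Lean). -/
noncomputable def entropyRV {Ω : Type*} [Fintype Ω] (p : Ω → ℝ) {α : Type*} [DecidableEq α]
    (W : Ω → α) : ℝ :=
  -∑ a ∈ univ.image W, probOf p W a * Real.logb 2 (probOf p W a)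

/-- The binary entropy function `h_b(p) = −p log₂ p − (1−p) log₂(1−p)`. -/
noncomputable def binEnt (p : ℝ) : ℝ :=
  -(p * Real.logb 2 p) - (1 - p) * Real.logb 2 (1 - p)

lemma probOf_nonneg {Ω : Type*} [Fintype Ω] {p : Ω → ℝ} (hp : ∀ ω, 0 ≤ p ω)
    {α : Type*} [DecidableEq α] (W : Ω → α) (a : α) : 0 ≤ probOf p W a :=
  Finset.sum_nonneg fun ω _ => hp ω

lemma sum_probOf_mul {Ω : Type*} [Fintype Ω] (p : Ω → ℝ)
    {α : Type*} [DecidableEq α] (W : Ω → α) (F : α → ℝ) :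
    ∑ a ∈ univ.image W, probOf p W a * F a = ∑ ω, p ω * F (W ω) := by
  rw [← Finset.sum_fiberwise_of_maps_to (g := W) (t := univ.image W)
      (fun ω _ => Finset.mem_image_of_mem W (Finset.mem_univ ω)) (fun ω => p ω * F (W ω))]
  refine Finset.sum_congr rfl fun a _ => ?_
  rw [probOf, Finset.sum_mul]
  refine Finset.sum_congr rfl fun ω hω => ?_
  rw [(Finset.mem_filter.mp hω).2]

lemma gibbs {α : Type*} (s : Finset α) (q g : α → ℝ)
    (hq : ∀ a ∈ s, 0 ≤ q a) (hg : ∀ a ∈ s, 0 ≤ g a)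
    (h0 : ∀ a ∈ s, g a = 0 → q a = 0)
    (hsum : ∑ a ∈ s, g a ≤ ∑ a ∈ s, q a) :
    -∑ a ∈ s, q a * Real.log (q a) ≤ -∑ a ∈ s, q a * Real.log (g a) := by
  have key : ∀ a ∈ s, q a - g a ≤ q a * Real.log (q a) - q a * Real.log (g a) := by
    intro a ha
    rcases eq_or_lt_of_le (hq a ha) with h | h
    · simp [← h]; exact hg a ha
    · have hga : 0 < g a := by
        rcases eq_or_lt_of_le (hg a ha) with h' | h'
        · exact absurd (h0 a ha h'.symm) (by linarith)
        · exact h'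
      have hlog := Real.log_le_sub_one_of_pos (div_pos hga h)
      rw [Real.log_div hga.ne' h.ne'] at hlog
      have := mul_le_mul_of_nonneg_left hlog (le_of_lt h)
      have hq' : q a * (g a / q a - 1) = g a - q a := by field_simp
      nlinarith
  have := Finset.sum_le_sum key
  rw [Finset.sum_sub_distrib, Finset.sum_sub_distrib] at this
  linarith

lemma card_len_le (S : Finset (List Bool)) (n : ℕ) :
    ((S.filter (fun x => x.length = n)).card : ℝ) ≤ 2 ^ n := by
  have h : (S.filter (fun x => x.length = n)).card ≤ 2 ^ n := by
    have := Finset.card_le_card_of_injOn (s := S.filter (fun x => x.length = n))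
      (f := fun (l : List Bool) (i : Fin n) => l.getD i false)
      (t := (Finset.univ : Finset (Fin n → Bool)))
      (fun l _ => Finset.mem_univ _) ?_
    · simpa using this
    · intro l₁ h₁ l₂ h₂ hf
      have hl₁ := (Finset.mem_filter.mp (Finset.mem_coe.mp h₁)).2
      have hl₂ := (Finset.mem_filter.mp (Finset.mem_coe.mp h₂)).2
      apply List.ext_getElem (by rw [hl₁, hl₂])
      intro i hi₁ hi₂
      have : l₁.getD i false = l₂.getD i false := congrFun hf ⟨i, by omega⟩
      rwa [List.getD_eq_getElem l₁ false hi₁, List.getD_eq_getElem l₂ false hi₂] at this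
  calc ((S.filter (fun x => x.length = n)).card : ℝ) ≤ ((2^n : ℕ) : ℝ) := by exact_mod_cast h
    _ = 2 ^ n := by push_cast; ring

lemma entropyRV_eq {Ω : Type*} [Fintype Ω] (p : Ω → ℝ) {α : Type*} [DecidableEq α]
    (W : Ω → α) :
    entropyRV p W
      = (-∑ a ∈ univ.image W, probOf p W a * Real.log (probOf p W a)) / Real.log 2 := by
  rw [entropyRV, neg_div, Finset.sum_div]
  congr 1
  refine Finset.sum_congr rfl fun a _ => ?_
  rw [Real.logb, mul_div_assoc]


/-- **Entropy bound for variable-length messages (Eqs. (57)–(62) of the converse).**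
For a random bit-string `M` of length `L = len(M) ≥ 1`:
(a) `H₂(M) ≤ E[L] + H₂(L)`; and (b) if `E[L] ≤ m` with `m > 1`, then
`H₂(L) ≤ m·h_b(1/m)` and consequently `H₂(M) ≤ m·(1 + h_b(1/m))`. -/
theorem entropy_of_variable_length_message
    {Ω : Type*} [Fintype Ω] (p : Ω → ℝ) (hp : IsPMF p)
    (M : Ω → List Bool) (hlen : ∀ ω, 1 ≤ (M ω).length) :
    entropyRV p M ≤ (∑ ω, p ω * ((M ω).length : ℝ))
        + entropyRV p (fun ω => (M ω).length) ∧
    ∀ m : ℝ, 1 < m → (∑ ω, p ω * ((M ω).length : ℝ)) ≤ m →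
      entropyRV p (fun ω => (M ω).length) ≤ m * binEnt (1 / m) ∧
      entropyRV p M ≤ m * (1 + binEnt (1 / m)) := by
  obtain ⟨hp0, hp1⟩ := hp
  set L : Ω → ℕ := fun ω => (M ω).length with hL
  set E : ℝ := ∑ ω, p ω * ((M ω).length : ℝ) with hE
  have hlog2 : (0:ℝ) < Real.log 2 := Real.log_pos (by norm_num)
  have hQnn : ∀ x, 0 ≤ probOf p M x := probOf_nonneg hp0 M
  have hQLnn : ∀ ℓ, 0 ≤ probOf p L ℓ := probOf_nonneg hp0 L
  have hQsum : ∑ x ∈ univ.image M, probOf p M x = 1 := by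
    have := sum_probOf_mul p M (fun _ => 1)
    simpa [hp1] using this
  have hQLsum : ∑ ℓ ∈ univ.image L, probOf p L ℓ = 1 := by
    have := sum_probOf_mul p L (fun _ => 1)
    simpa [hp1] using this
  have hEL : ∑ ℓ ∈ univ.image L, probOf p L ℓ * (ℓ:ℝ) = E := by
    rw [hE]; exact sum_probOf_mul p L (fun ℓ => (ℓ:ℝ))
  have hQle : ∀ x : List Bool, probOf p M x ≤ probOf p L x.length := by
    intro x
    apply Finset.sum_le_sum_of_subset_of_nonneg
    · intro ω hω
      simp only [Finset.mem_filter, Finset.mem_univ, true_and] at hω ⊢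
      exact congrArg List.length hω
    · intro ω _ _; exact hp0 ω
  -- part (a) in natural log
  have ha : -∑ x ∈ univ.image M, probOf p M x * Real.log (probOf p M x)
      ≤ Real.log 2 * E
        + -∑ ℓ ∈ univ.image L, probOf p L ℓ * Real.log (probOf p L ℓ) := by
    set g : List Bool → ℝ := fun x => (2:ℝ)⁻¹ ^ x.length * probOf p L x.length with hgdef
    have hgnn : ∀ x, 0 ≤ g x := fun x => mul_nonneg (pow_nonneg (by norm_num) _) (hQLnn _)
    have h2pos : ∀ n : ℕ, (0:ℝ) < (2:ℝ)⁻¹ ^ n := fun n => pow_pos (by norm_num) n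
    have h0 : ∀ x ∈ univ.image M, g x = 0 → probOf p M x = 0 := by
      intro x _ hx
      have hQL0 : probOf p L x.length = 0 := by
        rcases mul_eq_zero.mp hx with h | h
        · exact absurd h (h2pos x.length).ne'
        · exact h
      have := hQle x
      have := hQnn x
      linarith [hQL0 ▸ hQle x]
    have hsum_g : ∑ x ∈ univ.image M, g x ≤ ∑ x ∈ univ.image M, probOf p M x := by
      rw [hQsum]
      have hfib : ∑ x ∈ univ.image M, g x
          = ∑ ℓ ∈ univ.image L, ∑ x ∈ (univ.image M).filter (fun x => x.length = ℓ), g x := by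
        rw [Finset.sum_fiberwise_of_maps_to]
        intro x hx
        obtain ⟨ω, _, rfl⟩ := Finset.mem_image.mp hx
        exact Finset.mem_image_of_mem L (Finset.mem_univ ω)
      rw [hfib, ← hQLsum]
      refine Finset.sum_le_sum fun ℓ _ => ?_
      have hcongr : ∑ x ∈ (univ.image M).filter (fun x => x.length = ℓ), g x
          = ((univ.image M).filter (fun x => x.length = ℓ)).card
            * ((2:ℝ)⁻¹ ^ ℓ * probOf p L ℓ) := by
        rw [Finset.sum_congr rfl (fun x hx => ?_), Finset.sum_const, nsmul_eq_mul]
        have hxl := (Finset.mem_filter.mp hx).2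
        rw [hgdef]; simp only []; rw [hxl]
      rw [hcongr]
      have hcard := card_len_le (univ.image M) ℓ
      have h2 : ((univ.image M).filter (fun x => x.length = ℓ)).card * ((2:ℝ)⁻¹ ^ ℓ) ≤ 1 := by
        rw [inv_pow]
        rw [mul_inv_le_iff₀ (by positivity)]
        simpa using hcard
      calc (((univ.image M).filter (fun x => x.length = ℓ)).card : ℝ)
            * ((2:ℝ)⁻¹ ^ ℓ * probOf p L ℓ)
          = (((univ.image M).filter (fun x => x.length = ℓ)).card * (2:ℝ)⁻¹ ^ ℓ)
            * probOf p L ℓ := by ring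
        _ ≤ 1 * probOf p L ℓ := mul_le_mul_of_nonneg_right h2 (hQLnn ℓ)
        _ = probOf p L ℓ := one_mul _
    have hgibbs := gibbs (univ.image M) (probOf p M) g (fun x _ => hQnn x)
      (fun x _ => hgnn x) h0 (by rw [hQsum] at hsum_g ⊢; exact hsum_g)
    have hterm : ∀ x ∈ univ.image M,
        probOf p M x * Real.log (g x)
          = probOf p M x * Real.log (probOf p L x.length)
            - probOf p M x * ((x.length : ℝ) * Real.log 2) := by
      intro x _
      rcases eq_or_lt_of_le (hQnn x) with h | h
      · rw [← h]; ring
      · have hQLpos : 0 < probOf p L x.length := lt_of_lt_of_le h (hQle x)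
        rw [hgdef]
        simp only []
        rw [Real.log_mul (h2pos x.length).ne' hQLpos.ne', Real.log_pow, Real.log_inv]
        ring
    have hrew : ∑ x ∈ univ.image M, probOf p M x * Real.log (g x)
        = ∑ x ∈ univ.image M, probOf p M x * Real.log (probOf p L x.length)
          - ∑ x ∈ univ.image M, probOf p M x * ((x.length : ℝ) * Real.log 2) := by
      rw [Finset.sum_congr rfl hterm, Finset.sum_sub_distrib]
    have hlen_sum : ∑ x ∈ univ.image M, probOf p M x * ((x.length : ℝ) * Real.log 2)
        = Real.log 2 * E := by
      rw [sum_probOf_mul p M (fun x => (x.length : ℝ) * Real.log 2), hE, Finset.mul_sum]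
      exact Finset.sum_congr rfl fun ω _ => by ring
    have hcross : ∑ x ∈ univ.image M, probOf p M x * Real.log (probOf p L x.length)
        = ∑ ℓ ∈ univ.image L, probOf p L ℓ * Real.log (probOf p L ℓ) := by
      rw [sum_probOf_mul p M (fun x => Real.log (probOf p L x.length)),
        sum_probOf_mul p L (fun ℓ => Real.log (probOf p L ℓ))]
    rw [hrew, hlen_sum, hcross] at hgibbs
    linarith
  -- convert part (a) to base-2
  have haRV : entropyRV p M ≤ E + entropyRV p L := by
    rw [entropyRV_eq p M, entropyRV_eq p L, div_le_iff₀ hlog2, add_mul,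
      div_mul_cancel₀ _ hlog2.ne']
    nlinarith
  refine ⟨haRV, fun m hm hEm => ?_⟩
  have hm0 : (0:ℝ) < m := by linarith
  have h1m : (0:ℝ) < 1/m := by positivity
  have h1m1 : 1/m < 1 := by rw [div_lt_one hm0]; linarith
  set r : ℝ := 1 - 1/m with hr
  have hr0 : 0 < r := by rw [hr]; linarith
  have hr1 : r < 1 := by rw [hr]; linarith
  set g : ℕ → ℝ := fun ℓ => m⁻¹ * r ^ (ℓ - 1) with hg
  have hgpos : ∀ ℓ, 0 < g ℓ := fun ℓ => mul_pos (by positivity) (pow_pos hr0 _)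
  have hT1 : ∀ ℓ ∈ univ.image L, 1 ≤ ℓ := by
    intro ℓ hℓ
    obtain ⟨ω, _, rfl⟩ := Finset.mem_image.mp hℓ
    exact hlen ω
  have hsum_g : ∑ ℓ ∈ univ.image L, g ℓ ≤ 1 := by
    set N := (univ.image L).sup id with hN
    have hsub : univ.image L ⊆ Icc 1 N := by
      intro ℓ hℓ
      exact Finset.mem_Icc.mpr ⟨hT1 ℓ hℓ, Finset.le_sup (f := id) hℓ⟩
    calc ∑ ℓ ∈ univ.image L, g ℓ ≤ ∑ ℓ ∈ Icc 1 N, g ℓ :=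
          Finset.sum_le_sum_of_subset_of_nonneg hsub (fun ℓ _ _ => (hgpos ℓ).le)
      _ = ∑ i ∈ range N, m⁻¹ * r ^ i := by
          rw [← Finset.Ico_add_one_right_eq_Icc, Finset.sum_Ico_eq_sum_range]
          simp only [Nat.add_sub_cancel_left, hg]
          norm_num
      _ = m⁻¹ * ((r ^ N - 1) / (r - 1)) := by rw [← Finset.mul_sum, geom_sum_eq hr1.ne]
      _ = 1 - r ^ N := by
          have hrm : r - 1 = -(1/m) := by rw [hr]; ring
          rw [hrm]
          field_simp
          ring
      _ ≤ 1 := by nlinarith [pow_pos hr0 N]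
  have hgibbs := gibbs (univ.image L) (probOf p L) g (fun ℓ _ => hQLnn ℓ)
    (fun ℓ _ => (hgpos ℓ).le) (fun ℓ _ h => absurd h (hgpos ℓ).ne')
    (by rw [hQLsum]; exact hsum_g)
  have hterm : ∀ ℓ ∈ univ.image L,
      probOf p L ℓ * Real.log (g ℓ)
        = probOf p L ℓ * (-Real.log m)
          + (probOf p L ℓ * (ℓ:ℝ) - probOf p L ℓ) * Real.log r := by
    intro ℓ hℓ
    rw [hg]
    simp only []
    rw [Real.log_mul (by positivity) (pow_pos hr0 _).ne', Real.log_pow, Real.log_inv,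
      Nat.cast_sub (hT1 ℓ hℓ)]
    push_cast
    ring
  have hrhs : ∑ ℓ ∈ univ.image L, probOf p L ℓ * Real.log (g ℓ)
      = -Real.log m + (E - 1) * Real.log r := by
    rw [Finset.sum_congr rfl hterm, Finset.sum_add_distrib, ← Finset.sum_mul,
      ← Finset.sum_mul, Finset.sum_sub_distrib, hEL, hQLsum]
    ring
  have hlogr : Real.log r ≤ 0 := Real.log_nonpos hr0.le hr1.le
  have hbL : -∑ ℓ ∈ univ.image L, probOf p L ℓ * Real.log (probOf p L ℓ)
      ≤ Real.log m - (m - 1) * Real.log r := by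
    rw [hrhs] at hgibbs
    nlinarith [mul_le_mul_of_nonpos_right (show E - 1 ≤ m - 1 by linarith) hlogr]
  have hbin : Real.log m - (m - 1) * Real.log r = m * binEnt (1/m) * Real.log 2 := by
    rw [binEnt, Real.logb, Real.logb, hr]
    have h1 : Real.log (1/m) = -Real.log m := by rw [one_div, Real.log_inv]
    rw [h1]
    field_simp
  have hbRV : entropyRV p L ≤ m * binEnt (1/m) := by
    rw [entropyRV_eq p L, div_le_iff₀ hlog2]
    rw [hbin] at hbL
    linarith
  exact ⟨hbRV, by nlinarith [haRV]⟩
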